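/- arXiv:0910.4257 — 2 statements merged into one kernel-verified Lean document; each statement's English description precedes it below -/
import Mathlib

section
/- Let $\sigma > 0$, $r \ge 0$, $\alpha > 0$, $T > 0$ and $\beta \ge \sigma^2/2 + r + 1$. Define $\bar u(t,s,a) = \frac{\alpha}{t}\left(1 + e^{-\beta t}\sqrt{s^2+a^2}\right)$. Then for all $t \in (0,T)$ and $s, a > 0$, $$\frac{\sigma^2 s^2}{2}\, \partial_{ss}\bar u + r s\, \partial_s \bar u + s\, \partial_a \bar u + \partial_t \bar u - r \bar u \le 0,$$ i.e. $L \bar u \le 0$ on $(0,T) \times \mathbb{R}^2_+$. -/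
set_option maxHeartbeats 1000000


/-- The candidate super-solution
`ū(t,s,a) = (α/t) (1 + e^{-β t} √(s² + a²))`. -/
noncomputable def ubar (α β : ℝ) (t s a : ℝ) : ℝ :=
  α / t * (1 + Real.exp (-β * t) * Real.sqrt (s ^ 2 + a ^ 2))

lemma hasDerivAt_sqrt_sq (a x : ℝ) (h : 0 < x ^ 2 + a ^ 2) :
    HasDerivAt (fun z : ℝ => Real.sqrt (z ^ 2 + a ^ 2))
      (x / Real.sqrt (x ^ 2 + a ^ 2)) x := by
  have hg : HasDerivAt (fun z : ℝ => z ^ 2 + a ^ 2) (2 * x) x := by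
    simpa using (hasDerivAt_pow 2 x).add_const (a ^ 2)
  have hs := (Real.hasDerivAt_sqrt (ne_of_gt h)).comp x hg
  have hsqrt : Real.sqrt (x ^ 2 + a ^ 2) ≠ 0 := ne_of_gt (Real.sqrt_pos.mpr h)
  have hs' : HasDerivAt (fun z : ℝ => Real.sqrt (z ^ 2 + a ^ 2))
      (1 / (2 * Real.sqrt (x ^ 2 + a ^ 2)) * (2 * x)) x := hs
  convert hs' using 1
  field_simp

lemma hasDerivAt_ubar_s (α β t a x : ℝ) (h : 0 < x ^ 2 + a ^ 2) :
    HasDerivAt (fun z : ℝ => ubar α β t z a)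
      (α / t * Real.exp (-β * t) * (x / Real.sqrt (x ^ 2 + a ^ 2))) x := by
  have h1 := ((hasDerivAt_sqrt_sq a x h).const_mul (Real.exp (-β * t))).const_add 1
  have h2 := h1.const_mul (α / t)
  unfold ubar
  exact h2.congr_deriv (by ring)

/-- For `σ > 0`, `r ≥ 0`, `α > 0`, `T > 0` and `β ≥ σ²/2 + r + 1`, the function
`ū(t,s,a) = (α/t)(1 + e^{-β t}√(s²+a²))` satisfies `L ū ≤ 0` on `(0,T) × ℝ²₊`,
where `L u = (σ² s²/2) ∂_{ss} u + r s ∂_s u + s ∂_a u + ∂_t u - r u` is the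
arithmetic Asian pricing operator. -/
theorem ubar_supersolution (σ r α T β : ℝ)
    (hσ : 0 < σ) (hr : 0 ≤ r) (hα : 0 < α) (hT : 0 < T)
    (hβ : σ ^ 2 / 2 + r + 1 ≤ β) :
    ∀ t ∈ Set.Ioo (0 : ℝ) T, ∀ s a : ℝ, 0 < s → 0 < a →
      σ ^ 2 * s ^ 2 / 2 *
          deriv (fun y => deriv (fun z => ubar α β t z a) y) s
        + r * s * deriv (fun z => ubar α β t z a) s
        + s * deriv (fun w => ubar α β t s w) a
        + deriv (fun τ => ubar α β τ s a) t
        - r * ubar α β t s a ≤ 0 := by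
  rintro t ⟨ht, htT⟩ s a hs ha
  set ρ : ℝ := Real.sqrt (s ^ 2 + a ^ 2) with hρdef
  set E : ℝ := Real.exp (-β * t) with hEdef
  have hsa : 0 < s ^ 2 + a ^ 2 := by positivity
  have hρ : 0 < ρ := Real.sqrt_pos.mpr hsa
  have hρsq : ρ ^ 2 = s ^ 2 + a ^ 2 := Real.sq_sqrt hsa.le
  have hE : 0 < E := Real.exp_pos _
  -- first s-derivative
  have hds : deriv (fun z => ubar α β t z a) s = α / t * E * (s / ρ) :=
    (hasDerivAt_ubar_s α β t a s hsa).deriv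
  -- the derivative function in s
  have hfun : (fun y => deriv (fun z => ubar α β t z a) y)
      = fun y => α / t * E * (y / Real.sqrt (y ^ 2 + a ^ 2)) := by
    funext y
    exact (hasDerivAt_ubar_s α β t a y (by positivity)).deriv
  -- second s-derivative
  have hdiv : HasDerivAt (fun y : ℝ => y / Real.sqrt (y ^ 2 + a ^ 2))
      ((1 * ρ - s * (s / ρ)) / ρ ^ 2) s :=
    (hasDerivAt_id s).div (hasDerivAt_sqrt_sq a s hsa) (ne_of_gt hρ)
  have hdss : deriv (fun y => α / t * E * (y / Real.sqrt (y ^ 2 + a ^ 2))) s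
      = α / t * E * (a ^ 2 / ρ ^ 3) := by
    have h2 := (hdiv.const_mul (α / t * E)).deriv
    rw [h2]
    have hv : (1 * ρ - s * (s / ρ)) / ρ ^ 2 = a ^ 2 / ρ ^ 3 := by
      rw [div_eq_div_iff (by positivity) (by positivity)]
      field_simp
      linear_combination hρsq
    rw [hv]
  -- a-derivative
  have hsqa : HasDerivAt (fun w : ℝ => Real.sqrt (s ^ 2 + w ^ 2)) (a / ρ) a := by
    have h1 := hasDerivAt_sqrt_sq s a (by positivity)
    have heq : (fun z : ℝ => Real.sqrt (z ^ 2 + s ^ 2))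
        = fun w : ℝ => Real.sqrt (s ^ 2 + w ^ 2) := by
      funext z; rw [add_comm]
    rw [heq] at h1
    have hc : Real.sqrt (a ^ 2 + s ^ 2) = ρ := by rw [hρdef, add_comm]
    rwa [hc] at h1
  have hda : deriv (fun w => ubar α β t s w) a = α / t * E * (a / ρ) := by
    have h1 := ((hsqa.const_mul E).const_add 1).const_mul (α / t)
    have h2 : HasDerivAt (fun w => ubar α β t s w) (α / t * (E * (a / ρ))) a := by
      unfold ubar
      rw [hEdef] at h1 ⊢
      exact h1
    rw [h2.deriv]; ring
  -- t-derivative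
  have hdt : deriv (fun τ => ubar α β τ s a) t
      = -α / t ^ 2 * (1 + E * ρ) + α / t * (E * (-β) * ρ) := by
    have hinv : HasDerivAt (fun τ : ℝ => α / τ) (α * -(t ^ 2)⁻¹) t := by
      simpa [div_eq_mul_inv] using (hasDerivAt_inv (ne_of_gt ht)).const_mul α
    have hexp : HasDerivAt (fun τ : ℝ => Real.exp (-β * τ)) (Real.exp (-β * t) * -β) t := by
      have h1 : HasDerivAt (fun τ : ℝ => -β * τ) (-β) t := by
        simpa using (hasDerivAt_id t).const_mul (-β)
      exact h1.exp
    have hsecond : HasDerivAt (fun τ : ℝ => 1 + Real.exp (-β * τ) * ρ)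
        (Real.exp (-β * t) * -β * ρ) t := (hexp.mul_const ρ).const_add 1
    have hmul := hinv.mul hsecond
    have h3 : HasDerivAt (fun τ => ubar α β τ s a)
        (α * -(t ^ 2)⁻¹ * (1 + Real.exp (-β * t) * ρ)
          + α / t * (Real.exp (-β * t) * -β * ρ)) t := by
      unfold ubar
      rw [hρdef]
      exact hmul
    rw [h3.deriv, ← hEdef]; ring
  -- rewrite the goal
  have hbar : ubar α β t s a = α / t * (1 + E * ρ) := rfl
  rw [hfun, hdss, hds, hda, hdt, hbar]
  clear_value ρ E
  clear hfun hds hdss hda hdt hdiv hsqa hbar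
  -- main bracket bound
  have key : σ ^ 2 * s ^ 2 / 2 * (a ^ 2 / ρ ^ 3) + r * s * (s / ρ) + s * (a / ρ)
      ≤ β * ρ := by
    have heq : σ ^ 2 * s ^ 2 / 2 * (a ^ 2 / ρ ^ 3) + r * s * (s / ρ) + s * (a / ρ)
        = (σ ^ 2 * s ^ 2 * a ^ 2 / 2 + r * s ^ 2 * ρ ^ 2 + s * a * ρ ^ 2) / ρ ^ 3 := by
      field_simp
    rw [heq, div_le_iff₀ (by positivity)]
    have e1 : s ^ 2 * a ^ 2 ≤ (s ^ 2 + a ^ 2) ^ 2 := by nlinarith [sq_nonneg (s * a)]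
    have e2 : s ^ 2 * (s ^ 2 + a ^ 2) ≤ (s ^ 2 + a ^ 2) ^ 2 := by nlinarith [sq_nonneg a]
    have e3 : s * a * (s ^ 2 + a ^ 2) ≤ (s ^ 2 + a ^ 2) ^ 2 := by
      nlinarith [sq_nonneg (s - a)]
    have hβ' : 0 ≤ β - (σ ^ 2 / 2 + r + 1) := by linarith
    have hρ4 : β * ρ * ρ ^ 3 = β * (s ^ 2 + a ^ 2) ^ 2 := by
      have hr4 : ρ * ρ ^ 3 = (ρ ^ 2) ^ 2 := by ring
      rw [mul_assoc, hr4, hρsq]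
    rw [hρsq, hρ4]
    nlinarith [mul_nonneg (by positivity : (0:ℝ) ≤ σ ^ 2 / 2) (sub_nonneg.mpr e1),
      mul_nonneg hr (sub_nonneg.mpr e2), sub_nonneg.mpr e3,
      mul_nonneg hβ' (sq_nonneg (s ^ 2 + a ^ 2))]
  have hK : 0 < α / t * E := mul_pos (div_pos hα ht) hE
  have h3 : σ ^ 2 * s ^ 2 / 2 * (α / t * E * (a ^ 2 / ρ ^ 3))
      + r * s * (α / t * E * (s / ρ)) + s * (α / t * E * (a / ρ))
      ≤ α / t * E * (β * ρ) := by
    have h4 := mul_le_mul_of_nonneg_left key hK.le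
    calc σ ^ 2 * s ^ 2 / 2 * (α / t * E * (a ^ 2 / ρ ^ 3))
        + r * s * (α / t * E * (s / ρ)) + s * (α / t * E * (a / ρ))
        = α / t * E * (σ ^ 2 * s ^ 2 / 2 * (a ^ 2 / ρ ^ 3) + r * s * (s / ρ)
            + s * (a / ρ)) := by ring
      _ ≤ α / t * E * (β * ρ) := h4
  have hEρ : 0 ≤ 1 + E * ρ := by nlinarith [mul_pos hE hρ]
  have n1 : 0 ≤ α / t ^ 2 * (1 + E * ρ) :=
    mul_nonneg (by positivity) hEρ
  have n2 : 0 ≤ r * (α / t * (1 + E * ρ)) :=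
    mul_nonneg hr (mul_nonneg (div_pos hα ht).le hEρ)
  have hzero : α / t * E * (β * ρ) + (-α / t ^ 2 * (1 + E * ρ) + α / t * (E * -β * ρ))
      - r * (α / t * (1 + E * ρ))
      = -(α / t ^ 2 * (1 + E * ρ)) - r * (α / t * (1 + E * ρ)) := by ring
  linarith [h3, n1, n2, hzero]
end

section
/- Let $\sigma > 0$, $r \ge 0$, $K \ge 0$, $T > 0$, $\beta \ge \sigma^2/2 + r + 1$ and $\alpha \ge e^{\beta T}$. Define $\bar u(t,s,a) = \frac{\alpha}{t}\left(1 + e^{-\beta t}\sqrt{s^2+a^2}\right)$ and $\varphi(t,s,a) = (a/t - K)^+$. Then $\bar u$ is a super-solution of the obstacle problem for the arithmetic Asian option: for all $t \in (0,T)$ and $s,a > 0$, $$\max\left\{\frac{\sigma^2 s^2}{2}\partial_{ss}\bar u + rs\,\partial_s\bar u + s\,\partial_a\bar u + \partial_t\bar u - r\bar u,\ \varphi(t,s,a) - \bar u(t,s,a)\right\} \le 0,$$ and $\bar u(T,s,a) \ge \varphi(T,s,a)$ for all $s, a > 0$. -/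
lemma sqrt_deriv1 (a y : ℝ) (ha : 0 < a) :
    HasDerivAt (fun z : ℝ => Real.sqrt (z ^ 2 + a ^ 2))
      (y / Real.sqrt (y ^ 2 + a ^ 2)) y := by
  have hq : (0:ℝ) < y ^ 2 + a ^ 2 := by positivity
  have h1 : HasDerivAt (fun z : ℝ => z ^ 2 + a ^ 2) (2 * y) y := by
    simpa using (hasDerivAt_pow 2 y).add_const (a ^ 2)
  have h2 := (Real.hasDerivAt_sqrt (ne_of_gt hq)).comp y h1
  refine h2.congr_deriv ?_
  have hne : Real.sqrt (y ^ 2 + a ^ 2) ≠ 0 := by positivity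
  field_simp

lemma sqrt_deriv2 (s w : ℝ) (hs : 0 < s) :
    HasDerivAt (fun z : ℝ => Real.sqrt (s ^ 2 + z ^ 2))
      (w / Real.sqrt (s ^ 2 + w ^ 2)) w := by
  have hq : (0:ℝ) < s ^ 2 + w ^ 2 := by positivity
  have h1 : HasDerivAt (fun z : ℝ => s ^ 2 + z ^ 2) (2 * w) w := by
    simpa using (HasDerivAt.const_add (s ^ 2) (hasDerivAt_pow 2 w))
  have h2 := (Real.hasDerivAt_sqrt (ne_of_gt hq)).comp w h1
  refine h2.congr_deriv ?_
  have hne : Real.sqrt (s ^ 2 + w ^ 2) ≠ 0 := by positivity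
  field_simp

lemma ubar_sderiv (α β t a y : ℝ) (ha : 0 < a) :
    HasDerivAt (fun z => ubar α β t z a)
      (α / t * (Real.exp (-β * t) * (y / Real.sqrt (y ^ 2 + a ^ 2)))) y := by
  have h := (((sqrt_deriv1 a y ha).const_mul (Real.exp (-β * t))).const_add 1).const_mul (α / t)
  simpa [ubar] using h

lemma ubar_tderiv (α β t s a : ℝ) (ht : 0 < t) :
    HasDerivAt (fun τ => ubar α β τ s a)
      (α * (-(t ^ 2)⁻¹) * (1 + Real.exp (-β * t) * Real.sqrt (s ^ 2 + a ^ 2))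
        + α / t * (Real.exp (-β * t) * (-β) * Real.sqrt (s ^ 2 + a ^ 2))) t := by
  have h1 : HasDerivAt (fun τ : ℝ => α / τ) (α * (-(t ^ 2)⁻¹)) t := by
    simpa [div_eq_mul_inv] using (hasDerivAt_inv (ne_of_gt ht)).const_mul α
  have h2 : HasDerivAt (fun τ : ℝ => 1 + Real.exp (-β * τ) * Real.sqrt (s ^ 2 + a ^ 2))
      (Real.exp (-β * t) * (-β) * Real.sqrt (s ^ 2 + a ^ 2)) t := by
    have ha' : HasDerivAt (fun τ : ℝ => -β * τ) (-β) t := by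
      simpa using (hasDerivAt_id t).const_mul (-β)
    have he := (Real.hasDerivAt_exp (-β * t)).comp t ha'
    exact ((he.mul_const (Real.sqrt (s ^ 2 + a ^ 2))).const_add 1)
  have h := h1.mul h2
  have : (fun τ => ubar α β τ s a)
      = fun τ => (α / τ) * (1 + Real.exp (-β * τ) * Real.sqrt (s ^ 2 + a ^ 2)) := rfl
  rw [this]
  exact h

lemma e2_lemma (s a ρ : ℝ) (hρ : 0 < ρ) (hρsq : ρ ^ 2 = s ^ 2 + a ^ 2) :
    (1 * ρ - s * (s / ρ)) / ρ ^ 2 = a ^ 2 / ρ ^ 3 := by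
  field_simp
  linear_combination hρsq

lemma pde_ineq (σ r β α t s a ρ E U : ℝ)
    (hσ : 0 < σ) (hr : 0 ≤ r) (hβ : σ ^ 2 / 2 + r + 1 ≤ β)
    (ht0 : 0 < t) (hs : 0 < s) (ha : 0 < a)
    (hρ : 0 < ρ) (hρsq : ρ ^ 2 = s ^ 2 + a ^ 2)
    (hE : 0 < E) (hα0 : 0 < α) (hU : 0 ≤ U) :
    σ ^ 2 * s ^ 2 / 2 * (α / t * (E * (a ^ 2 / ρ ^ 3)))
      + r * s * (α / t * (E * (s / ρ)))
      + s * (α / t * (E * (a / ρ)))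
      + (α * (-(t ^ 2)⁻¹) * (1 + E * ρ) + α / t * (E * (-β) * ρ))
      - r * U ≤ 0 := by
  have hCE : (0:ℝ) < α / t * E := by positivity
  have h3 : s ^ 2 * (a ^ 2 / ρ ^ 3) ≤ ρ := by
    rw [← mul_div_assoc, div_le_iff₀ (by positivity : (0:ℝ) < ρ ^ 3)]
    nlinarith [hρsq, sq_nonneg (s * a), sq_nonneg s, sq_nonneg a]
  have h4 : s * (s / ρ) ≤ ρ := by
    rw [← mul_div_assoc, div_le_iff₀ hρ]
    nlinarith [hρsq, sq_nonneg a]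
  have h5 : s * (a / ρ) ≤ ρ := by
    rw [← mul_div_assoc, div_le_iff₀ hρ]
    nlinarith [hρsq, sq_nonneg (s - a)]
  have key : σ ^ 2 * s ^ 2 / 2 * (α / t * (E * (a ^ 2 / ρ ^ 3)))
      + r * s * (α / t * (E * (s / ρ))) + s * (α / t * (E * (a / ρ)))
      ≤ α / t * E * (β * ρ) := by
    have inner : σ ^ 2 / 2 * (s ^ 2 * (a ^ 2 / ρ ^ 3)) + r * (s * (s / ρ)) + s * (a / ρ)
        ≤ β * ρ := by
      have b1 : σ ^ 2 / 2 * (s ^ 2 * (a ^ 2 / ρ ^ 3)) ≤ σ ^ 2 / 2 * ρ :=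
        mul_le_mul_of_nonneg_left h3 (by positivity)
      have b2 : r * (s * (s / ρ)) ≤ r * ρ := mul_le_mul_of_nonneg_left h4 hr
      nlinarith [hρ]
    calc σ ^ 2 * s ^ 2 / 2 * (α / t * (E * (a ^ 2 / ρ ^ 3)))
          + r * s * (α / t * (E * (s / ρ))) + s * (α / t * (E * (a / ρ)))
        = α / t * E * (σ ^ 2 / 2 * (s ^ 2 * (a ^ 2 / ρ ^ 3)) + r * (s * (s / ρ)) + s * (a / ρ)) := by
          ring
      _ ≤ α / t * E * (β * ρ) := mul_le_mul_of_nonneg_left inner hCE.le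
  have hneg : α * (-(t ^ 2)⁻¹) * (1 + E * ρ) ≤ 0 := by
    have h0 : (0:ℝ) ≤ α * (t ^ 2)⁻¹ * (1 + E * ρ) := by
      apply mul_nonneg (mul_nonneg hα0.le (by positivity))
      positivity
    nlinarith
  have hcancel : α / t * (E * (-β) * ρ) = -(α / t * E * (β * ρ)) := by ring
  have hru : 0 ≤ r * U := mul_nonneg hr hU
  linarith

lemma obstacle_le (K T β α t s a : ℝ)
    (hK : 0 ≤ K) (hβ0 : 0 ≤ β) (hα : Real.exp (β * T) ≤ α)
    (ht0 : 0 < t) (htT : t ≤ T) (hs : 0 < s) (ha : 0 < a) :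
    max (a / t - K) 0 ≤ ubar α β t s a := by
  have hq : (0:ℝ) < s ^ 2 + a ^ 2 := by positivity
  have hρ : (0:ℝ) < Real.sqrt (s ^ 2 + a ^ 2) := Real.sqrt_pos.mpr hq
  set ρ : ℝ := Real.sqrt (s ^ 2 + a ^ 2) with hρdef
  have hE : (0:ℝ) < Real.exp (-β * t) := Real.exp_pos _
  have hα0 : (0:ℝ) < α := lt_of_lt_of_le (Real.exp_pos _) hα
  have haρ : a ≤ ρ := by
    rw [hρdef]
    nlinarith [Real.sq_sqrt hq.le, hρ, sq_nonneg s]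
  have h1E : (1:ℝ) ≤ α * Real.exp (-β * t) := by
    have hmul : Real.exp (β * T) * Real.exp (-β * t) = Real.exp (β * T + -β * t) :=
      (Real.exp_add _ _).symm
    have h2 : (1:ℝ) ≤ Real.exp (β * T + -β * t) := by
      rw [← Real.exp_zero]
      apply Real.exp_le_exp.mpr
      nlinarith
    nlinarith [Real.exp_pos (-β * t)]
  apply max_le
  · have key : a ≤ α * (1 + Real.exp (-β * t) * ρ) := by nlinarith
    calc a / t - K ≤ a / t := by linarith
      _ ≤ α * (1 + Real.exp (-β * t) * ρ) / t := by gcongr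
      _ = ubar α β t s a := by rw [ubar]; ring
  · rw [ubar]
    have : (0:ℝ) ≤ 1 + Real.exp (-β * t) * ρ := by positivity
    exact mul_nonneg (div_nonneg hα0.le ht0.le) this

/-- For `σ > 0`, `r ≥ 0`, `K ≥ 0`, `T > 0`, `β ≥ σ²/2 + r + 1` and
`α ≥ e^{β T}`, the function `ū(t,s,a) = (α/t)(1 + e^{-β t}√(s²+a²))` is a
super-solution of the obstacle problem for the arithmetic Asian option with
fixed-strike payoff `φ(t,s,a) = (a/t - K)⁺`:
`max {L ū, φ - ū} ≤ 0` on `(0,T) × ℝ²₊` and `ū(T,·) ≥ φ(T,·)` on `ℝ²₊`. -/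
theorem ubar_supersolution_obstacle (σ r K T β α : ℝ)
    (hσ : 0 < σ) (hr : 0 ≤ r) (hK : 0 ≤ K) (hT : 0 < T)
    (hβ : σ ^ 2 / 2 + r + 1 ≤ β) (hα : Real.exp (β * T) ≤ α) :
    (∀ t ∈ Set.Ioo (0 : ℝ) T, ∀ s a : ℝ, 0 < s → 0 < a →
      max
        (σ ^ 2 * s ^ 2 / 2 *
            deriv (fun y => deriv (fun z => ubar α β t z a) y) s
          + r * s * deriv (fun z => ubar α β t z a) s
          + s * deriv (fun w => ubar α β t s w) a
          + deriv (fun τ => ubar α β τ s a) t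
          - r * ubar α β t s a)
        (max (a / t - K) 0 - ubar α β t s a) ≤ 0) ∧
    (∀ s a : ℝ, 0 < s → 0 < a → max (a / T - K) 0 ≤ ubar α β T s a) := by
  have hβ0 : (0:ℝ) ≤ β := by nlinarith [sq_nonneg σ]
  constructor
  · intro t ht s a hs ha
    obtain ⟨ht0, htT⟩ := ht
    have hq : (0:ℝ) < s ^ 2 + a ^ 2 := by positivity
    have hρ : (0:ℝ) < Real.sqrt (s ^ 2 + a ^ 2) := Real.sqrt_pos.mpr hq
    have hρsq : Real.sqrt (s ^ 2 + a ^ 2) ^ 2 = s ^ 2 + a ^ 2 := Real.sq_sqrt hq.le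
    have hE : (0:ℝ) < Real.exp (-β * t) := Real.exp_pos _
    have hα0 : (0:ℝ) < α := lt_of_lt_of_le (Real.exp_pos _) hα
    have hd1 : (fun y => deriv (fun z => ubar α β t z a) y)
        = fun y => α / t * (Real.exp (-β * t) * (y / Real.sqrt (y ^ 2 + a ^ 2))) :=
      funext fun y => (ubar_sderiv α β t a y ha).deriv
    have hd2 : deriv (fun y => deriv (fun z => ubar α β t z a) y) s
        = α / t * (Real.exp (-β * t) *
            ((1 * Real.sqrt (s ^ 2 + a ^ 2) - s * (s / Real.sqrt (s ^ 2 + a ^ 2)))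
              / Real.sqrt (s ^ 2 + a ^ 2) ^ 2)) := by
      rw [hd1]
      exact (((((hasDerivAt_id s).div (sqrt_deriv1 a s ha) (ne_of_gt hρ)).const_mul
        (Real.exp (-β * t))).const_mul (α / t))).deriv
    have hd1' : deriv (fun z => ubar α β t z a) s
        = α / t * (Real.exp (-β * t) * (s / Real.sqrt (s ^ 2 + a ^ 2))) :=
      (ubar_sderiv α β t a s ha).deriv
    have hda : deriv (fun w => ubar α β t s w) a
        = α / t * (Real.exp (-β * t) * (a / Real.sqrt (s ^ 2 + a ^ 2))) := by
      have h := (((sqrt_deriv2 s a hs).const_mul (Real.exp (-β * t))).const_add 1).const_mul (α / t)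
      have h' : HasDerivAt (fun w => ubar α β t s w)
          (α / t * (Real.exp (-β * t) * (a / Real.sqrt (s ^ 2 + a ^ 2)))) a := by
        simpa [ubar] using h
      exact h'.deriv
    have hdt : deriv (fun τ => ubar α β τ s a) t
        = α * (-(t ^ 2)⁻¹) * (1 + Real.exp (-β * t) * Real.sqrt (s ^ 2 + a ^ 2))
          + α / t * (Real.exp (-β * t) * (-β) * Real.sqrt (s ^ 2 + a ^ 2)) :=
      (ubar_tderiv α β t s a ht0).deriv
    have e2 : (1 * Real.sqrt (s ^ 2 + a ^ 2) - s * (s / Real.sqrt (s ^ 2 + a ^ 2)))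
        / Real.sqrt (s ^ 2 + a ^ 2) ^ 2 = a ^ 2 / Real.sqrt (s ^ 2 + a ^ 2) ^ 3 :=
      e2_lemma s a _ hρ hρsq
    have hub0 : (0:ℝ) ≤ ubar α β t s a := by
      rw [ubar]
      have : (0:ℝ) ≤ 1 + Real.exp (-β * t) * Real.sqrt (s ^ 2 + a ^ 2) := by positivity
      exact mul_nonneg (div_nonneg hα0.le ht0.le) this
    rw [hd2, hd1', hda, hdt, e2]
    apply max_le
    · exact pde_ineq σ r β α t s a (Real.sqrt (s ^ 2 + a ^ 2)) (Real.exp (-β * t))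
        (ubar α β t s a) hσ hr hβ ht0 hs ha hρ hρsq hE hα0 hub0
    · have := obstacle_le K T β α t s a hK hβ0 hα ht0 htT.le hs ha
      linarith
  · intro s a hs ha
    exact obstacle_le K T β α T s a hK hβ0 hα hT le_rfl hs ha
end
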